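/- Let ψ(r) = 4r - r² for 0 < r ≤ 1 and ψ(r) = 6 - 4/r + 1/r² for r > 1. Define β(r) = ψ(r)/r - ψ'(r). Then β(r) > 0 for all r ∈ (0,∞). -/

import Mathlib

open Set

private lemma quadDeriv (r : ℝ) : HasDerivAt (fun x : ℝ => 4*x - x^2) (4 - 2*r) r := by
  have h := ((hasDerivAt_id r).const_mul (4:ℝ)).sub (hasDerivAt_pow 2 r)
  refine h.congr_deriv ?_
  push_cast
  ring

private lemma ratDeriv (r : ℝ) (hr : r ≠ 0) :
    HasDerivAt (fun x : ℝ => 6 - 4/x + 1/x^2) (4/r^2 - 2/r^3) r := by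
  have h1 : HasDerivAt (fun x : ℝ => x⁻¹) (-(1) / r ^ 2) r := by
    exact (hasDerivAt_inv hr).congr_deriv (by ring)
  have h2 : HasDerivAt (fun x : ℝ => (x^2)⁻¹) (-(((2:ℕ):ℝ) * r ^ 1) / (r^2) ^ 2) r :=
    (hasDerivAt_pow 2 r).inv (pow_ne_zero 2 hr)
  have h := ((hasDerivAt_const r (6:ℝ)).sub (h1.const_mul 4)).add h2
  have hfun : (fun x : ℝ => 6 - 4/x + 1/x^2) = fun x : ℝ => 6 - 4 * x⁻¹ + (x^2)⁻¹ := by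
    funext x; rw [div_eq_mul_inv, one_div]
  rw [hfun]
  refine h.congr_deriv ?_
  push_cast
  field_simp
  ring

/-- Positivity of the coefficient `β(r) = ψ(r)/r - ψ'(r)` for the Morawetz weight `ψ`. -/
theorem stmt7 (ψ : ℝ → ℝ)
    (hψ : ψ = fun r => if r ≤ 1 then 4*r - r^2 else 6 - 4/r + 1/r^2)
    (β : ℝ → ℝ) (hβ : β = fun r => ψ r / r - deriv ψ r) :
    ∀ r ∈ Set.Ioi (0:ℝ), 0 < β r := by
  intro r hr
  have hr0 : (0:ℝ) < r := hr
  subst hβ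
  subst hψ
  set ψ : ℝ → ℝ := fun r => if r ≤ 1 then 4*r - r^2 else 6 - 4/r + 1/r^2 with hψ
  rcases lt_trichotomy r 1 with h1 | h1 | h1
  · -- r < 1
    have heq : ψ =ᶠ[nhds r] fun x => 4*x - x^2 := by
      filter_upwards [Iio_mem_nhds h1] with x hx
      have hx1 : x ≤ 1 := le_of_lt (mem_Iio.mp hx)
      simp only [hψ, if_pos hx1]
    have hd : deriv ψ r = 4 - 2*r := by
      rw [heq.deriv_eq]
      exact (quadDeriv r).deriv
    have hψr : ψ r = 4*r - r^2 := by simp only [hψ, if_pos (le_of_lt h1)]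
    simp only [hd, hψr]
    have : (4*r - r^2)/r - (4 - 2*r) = r := by field_simp; ring
    rw [this]; exact hr0
  · -- r = 1
    subst h1
    have hψ1 : ψ 1 = 3 := by norm_num [hψ]
    have hleft : HasDerivWithinAt ψ 2 (Iic 1) 1 := by
      have h : HasDerivWithinAt (fun x : ℝ => 4*x - x^2) 2 (Iic 1) 1 := by
        have := (quadDeriv 1).hasDerivWithinAt (s := Iic 1)
        norm_num at this
        exact this
      refine h.congr (fun x hx => ?_) ?_
      · simp only [hψ, if_pos (mem_Iic.mp hx)]
      · norm_num [hψ]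
    have hright : HasDerivWithinAt ψ 2 (Ici 1) 1 := by
      have h : HasDerivWithinAt (fun x : ℝ => 6 - 4/x + 1/x^2) 2 (Ici 1) 1 := by
        have := (ratDeriv 1 one_ne_zero).hasDerivWithinAt (s := Ici 1)
        norm_num at this
        simpa only [one_div] using this
      refine h.congr (fun x hx => ?_) ?_
      · rcases eq_or_lt_of_le (mem_Ici.mp hx) with h | h
        · simp only [hψ, ← h]
          norm_num
        · simp only [hψ, if_neg (not_le.mpr h)]
      · norm_num [hψ]
    have hd : deriv ψ 1 = 2 := by
      have hda : HasDerivAt ψ 2 1 := by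
        have h := hleft.union hright
        rw [Iic_union_Ici] at h
        exact h.hasDerivAt (by simp)
      exact hda.deriv
    simp only [hd, hψ1]
    norm_num
  · -- r > 1
    have heq : ψ =ᶠ[nhds r] fun x => 6 - 4/x + 1/x^2 := by
      filter_upwards [Ioi_mem_nhds h1] with x hx
      simp only [hψ, if_neg (not_le.mpr (mem_Ioi.mp hx))]
    have hd : deriv ψ r = 4/r^2 - 2/r^3 := by
      rw [heq.deriv_eq]
      exact (ratDeriv r (ne_of_gt hr0)).deriv
    have hψr : ψ r = 6 - 4/r + 1/r^2 := by simp only [hψ, if_neg (not_le.mpr h1)]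
    simp only [hd, hψr]
    have key : (6 - 4/r + 1/r^2)/r - (4/r^2 - 2/r^3) = (6*r^2 - 8*r + 3)/r^3 := by
      field_simp; ring
    rw [key]
    apply div_pos
    · nlinarith [sq_nonneg (3*r - 2)]
    · positivity
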